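/- Let Q be a non-degenerate bilinear form on ℤ² admitting D ∈ SL₂(ℤ) with Q(x,y)=Q(y,Dx) for all x,y and Dx ≠ ±x for all nonzero x, and Q(x,x) ≤ 0 for all x. Then there exists an oriented ℤ-basis of ℤ² in which the matrix of Q equals one of: (−n, ±n; 0, −n), (−n, ±n; ∓n, −n), or (−n, ±n; ∓2n, −n) for some integer n ≥ 1. -/

import Mathlib

open Matrix

lemma conj_step (A Q P T B : Matrix (Fin 2) (Fin 2) ℤ) (h1 : Qᵀ * A * Q = B)
    (h2 : Pᵀ * B * P = T) : (Q * P)ᵀ * A * (Q * P) = T := by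
  rw [← h2, ← h1, transpose_mul]
  noncomm_ring

lemma transpose_fin2 (p q r s : ℤ) : (!![p, q; r, s])ᵀ = !![p, r; q, s] := by
  ext i j; fin_cases i <;> fin_cases j <;> rfl

lemma conj_fin_two (a b c d p q r s : ℤ) :
    (!![p, q; r, s])ᵀ * !![a, b; c, d] * !![p, q; r, s] =
      !![p*(a*p+b*r)+r*(c*p+d*r), p*(a*q+b*s)+r*(c*q+d*s);
         q*(a*p+b*r)+s*(c*p+d*r), q*(a*q+b*s)+s*(c*q+d*s)] := by
  rw [transpose_fin2]
  ext i j
  fin_cases i <;> fin_cases j <;>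
    simp [Matrix.mul_apply, Fin.sum_univ_two] <;> ring

lemma reduce_aux (k ε : ℤ) (hk : k = 1 ∨ k = 2 ∨ k = 3) (hε : ε = 1 ∨ ε = -1) :
    ∀ N : ℕ, ∀ a b c d : ℤ,
      2 * (-ε * a) + (-ε * d) ≤ (N : ℤ) →
      a * d - b * c = k → b - c = k → ε * a < 0 →
      ∃ P : Matrix (Fin 2) (Fin 2) ℤ, P.det = 1 ∧
        Pᵀ * !![a, b; c, d] * P = !![-ε, 1; 1 - k, -ε] := by
  have hε2 : ε * ε = 1 := by rcases hε with h | h <;> simp [h]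
  have hC : 3 ≤ 4*k - k*k ∧ 4*k - k*k ≤ 4 := by
    rcases hk with h | h | h <;> simp [h]
  intro N
  induction N with
  | zero =>
    intro a b c d hm hdet hbc ha
    exfalso
    have hα : 1 ≤ -ε * a := by nlinarith
    have hid : 4 * ((-ε*a) * (-ε*d)) = (4*k - k*k) + (b+c)^2 := by
      linear_combination (4*a*d) * hε2 + 4 * hdet - (b - c + k) * hbc
    have hγ : 1 ≤ -ε * d := by nlinarith [sq_nonneg (b + c)]
    push_cast at hm; omega
  | succ N ih =>
    intro a b c d hm hdet hbc ha
    have hα : 1 ≤ -ε * a := by nlinarith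
    have hid : 4 * ((-ε*a) * (-ε*d)) = (4*k - k*k) + (b+c)^2 := by
      linear_combination (4*a*d) * hε2 + 4 * hdet - (b - c + k) * hbc
    have hγ : 1 ≤ -ε * d := by nlinarith [sq_nonneg (b + c)]
    push_cast at hm
    rcases lt_or_ge (-ε * a) (-ε * (b + c)) with hβp | hβ1
    · -- β > α : translate with w = -1, Q = !![1,-1;0,1]
      obtain ⟨P, hP, hPe⟩ := ih a (b - a) (c - a) (a - b - c + d)
        (by nlinarith) (by linear_combination hdet) (by linarith) ha
      refine ⟨!![1,(-1:ℤ);0,1] * P, ?_, ?_⟩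
      · rw [Matrix.det_mul, hP, Matrix.det_fin_two_of]; ring
      · refine conj_step _ _ _ _ _ ?_ hPe
        rw [conj_fin_two]; congr 1 <;> norm_num <;> ring_nf <;> simp
    · rcases lt_or_ge (-ε * a) (ε * (b + c)) with hβn | hβ2
      · -- β < -α : translate with w = 1, Q = !![1,1;0,1]
        obtain ⟨P, hP, hPe⟩ := ih a (a + b) (a + c) (a + b + c + d)
          (by nlinarith) (by linear_combination hdet) (by linarith) ha
        refine ⟨!![1,(1:ℤ);0,1] * P, ?_, ?_⟩
        · rw [Matrix.det_mul, hP, Matrix.det_fin_two_of]; ring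
        · refine conj_step _ _ _ _ _ ?_ hPe
          rw [conj_fin_two]; congr 1 <;> norm_num <;> ring
      · rcases lt_or_ge (-ε * d) (-ε * a) with hsw | hle
        · -- γ < α : swap, Q = !![0,-1;1,0]
          obtain ⟨P, hP, hPe⟩ := ih d (-c) (-b) a
            (by nlinarith) (by linear_combination hdet) (by linarith) (by nlinarith)
          refine ⟨!![0,(-1:ℤ);1,0] * P, ?_, ?_⟩
          · rw [Matrix.det_mul, hP, Matrix.det_fin_two_of]; ring
          · refine conj_step _ _ _ _ _ ?_ hPe
            rw [conj_fin_two]; congr 1 <;> norm_num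
        · -- terminal: |β| ≤ α ≤ γ
          have hα1 : -ε * a = 1 := by
            nlinarith [mul_nonneg (by linarith : (0:ℤ) ≤ -ε*a - 1) (by linarith : (0:ℤ) ≤ -ε*d - (-ε*a)),
              mul_nonneg (by linarith : (0:ℤ) ≤ -ε*a - (-ε*(b+c))) (by linarith : (0:ℤ) ≤ -ε*a + (-ε*(b+c)))]
          have hγ1 : -ε * d = 1 := by
            nlinarith [mul_nonneg (by linarith : (0:ℤ) ≤ -ε*a - (-ε*(b+c))) (by linarith : (0:ℤ) ≤ -ε*a + (-ε*(b+c)))]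
          have hb2 : (b+c)*(b+c) = k*k - 4*k + 4 := by nlinarith [hid, hα1, hγ1]
          clear hm hid hα hγ hβ1 hβ2 hle ha hdet
          rcases hε with hε1 | hε1 <;> subst hε1
          · rcases hk with hk1 | hk1 | hk1 <;> subst hk1
            · rcases mul_self_eq_one_iff.mp (by linarith : (b+c)*(b+c) = 1) with h | h
              · have ha' : a = -1 := by omega
                have hd' : d = -1 := by omega
                have hb' : b = 1 := by omega
                have hc' : c = 0 := by omega
                subst ha' hb' hc' hd'
                exact ⟨!![1,0;0,1], by norm_num [Matrix.det_fin_two_of], by rw [conj_fin_two]; norm_num⟩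
              · have ha' : a = -1 := by omega
                have hd' : d = -1 := by omega
                have hb' : b = 0 := by omega
                have hc' : c = -1 := by omega
                subst ha' hb' hc' hd'
                exact ⟨!![1,-1;0,1], by norm_num [Matrix.det_fin_two_of], by rw [conj_fin_two]; norm_num⟩
            · have h := mul_self_eq_zero.mp (by linarith : (b+c)*(b+c) = 0)
              have ha' : a = -1 := by omega
              have hd' : d = -1 := by omega
              have hb' : b = 1 := by omega
              have hc' : c = -1 := by omega
              subst ha' hb' hc' hd'
              exact ⟨!![1,0;0,1], by norm_num [Matrix.det_fin_two_of], by rw [conj_fin_two]; norm_num⟩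
            · rcases mul_self_eq_one_iff.mp (by linarith : (b+c)*(b+c) = 1) with h | h
              · have ha' : a = -1 := by omega
                have hd' : d = -1 := by omega
                have hb' : b = 2 := by omega
                have hc' : c = -1 := by omega
                subst ha' hb' hc' hd'
                exact ⟨!![1,1;0,1], by norm_num [Matrix.det_fin_two_of], by rw [conj_fin_two]; norm_num⟩
              · have ha' : a = -1 := by omega
                have hd' : d = -1 := by omega
                have hb' : b = 1 := by omega
                have hc' : c = -2 := by omega
                subst ha' hb' hc' hd'
                exact ⟨!![1,0;0,1], by norm_num [Matrix.det_fin_two_of], by rw [conj_fin_two]; norm_num⟩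
          · rcases hk with hk1 | hk1 | hk1 <;> subst hk1
            · rcases mul_self_eq_one_iff.mp (by linarith : (b+c)*(b+c) = 1) with h | h
              · have ha' : a = 1 := by omega
                have hd' : d = 1 := by omega
                have hb' : b = 1 := by omega
                have hc' : c = 0 := by omega
                subst ha' hb' hc' hd'
                exact ⟨!![1,0;0,1], by norm_num [Matrix.det_fin_two_of], by rw [conj_fin_two]; norm_num⟩
              · have ha' : a = 1 := by omega
                have hd' : d = 1 := by omega
                have hb' : b = 0 := by omega
                have hc' : c = -1 := by omega
                subst ha' hb' hc' hd'
                exact ⟨!![1,1;0,1], by norm_num [Matrix.det_fin_two_of], by rw [conj_fin_two]; norm_num⟩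
            · have h := mul_self_eq_zero.mp (by linarith : (b+c)*(b+c) = 0)
              have ha' : a = 1 := by omega
              have hd' : d = 1 := by omega
              have hb' : b = 1 := by omega
              have hc' : c = -1 := by omega
              subst ha' hb' hc' hd'
              exact ⟨!![1,0;0,1], by norm_num [Matrix.det_fin_two_of], by rw [conj_fin_two]; norm_num⟩
            · rcases mul_self_eq_one_iff.mp (by linarith : (b+c)*(b+c) = 1) with h | h
              · have ha' : a = 1 := by omega
                have hd' : d = 1 := by omega
                have hb' : b = 2 := by omega
                have hc' : c = -1 := by omega
                subst ha' hb' hc' hd'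
                exact ⟨!![1,-1;0,1], by norm_num [Matrix.det_fin_two_of], by rw [conj_fin_two]; norm_num⟩
              · have ha' : a = 1 := by omega
                have hd' : d = 1 := by omega
                have hb' : b = 1 := by omega
                have hc' : c = -2 := by omega
                subst ha' hb' hc' hd'
                exact ⟨!![1,0;0,1], by norm_num [Matrix.det_fin_two_of], by rw [conj_fin_two]; norm_num⟩

set_option maxHeartbeats 2000000

/-- Let `Q` be a non-degenerate bilinear form on `ℤ²` (given by the matrix `M`, via
`Q(x,y) = x ⬝ᵥ M *ᵥ y`) with `Q(x,x) ≤ 0` for all `x`, admitting `D ∈ SL₂(ℤ)` with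
`Q(x,y) = Q(y,Dx)` for all `x,y` and `Dx ≠ ±x` for all nonzero `x`. Then in a suitable
oriented ℤ-basis (change of basis matrix `P` with `det P = 1`) the matrix of `Q` is one of
`(−n, ±n; 0, −n)`, `(−n, ±n; ∓n, −n)`, `(−n, ±n; ∓2n, −n)` for some `n ≥ 1`. -/

theorem euler_form_normal_form (M : Matrix (Fin 2) (Fin 2) ℤ)
    (hnd : ∀ x : Fin 2 → ℤ, (∀ y : Fin 2 → ℤ, x ⬝ᵥ M.mulVec y = 0) → x = 0)
    (hneg : ∀ x : Fin 2 → ℤ, x ⬝ᵥ M.mulVec x ≤ 0)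
    (D : Matrix.SpecialLinearGroup (Fin 2) ℤ)
    (hadj : ∀ x y : Fin 2 → ℤ,
      x ⬝ᵥ M.mulVec y = y ⬝ᵥ M.mulVec ((D : Matrix (Fin 2) (Fin 2) ℤ).mulVec x))
    (hfix : ∀ x : Fin 2 → ℤ, x ≠ 0 →
      (D : Matrix (Fin 2) (Fin 2) ℤ).mulVec x ≠ x ∧
      (D : Matrix (Fin 2) (Fin 2) ℤ).mulVec x ≠ -x) :
    ∃ P : Matrix (Fin 2) (Fin 2) ℤ, P.det = 1 ∧
      ∃ n : ℤ, 1 ≤ n ∧ ∃ ε : ℤ, (ε = 1 ∨ ε = -1) ∧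
        (Pᵀ * M * P = !![-n, ε * n; 0, -n] ∨
         Pᵀ * M * P = !![-n, ε * n; -ε * n, -n] ∨
         Pᵀ * M * P = !![-n, ε * n; -2 * ε * n, -n]) := by
  obtain ⟨a, b, c, d, rfl⟩ : ∃ a b c d, M = !![a, b; c, d] :=
    ⟨M 0 0, M 0 1, M 1 0, M 1 1, by ext i j; fin_cases i <;> fin_cases j <;> rfl⟩
  obtain ⟨Dm, hDdet⟩ := D
  obtain ⟨p, q, r, s, rfl⟩ : ∃ p q r s, Dm = !![p, q; r, s] :=
    ⟨Dm 0 0, Dm 0 1, Dm 1 0, Dm 1 1, by ext i j; fin_cases i <;> fin_cases j <;> rfl⟩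
  simp only [Matrix.SpecialLinearGroup.coe_mk] at hadj hfix
  rw [Matrix.det_fin_two_of] at hDdet
  -- basic equations from adjointness
  have e1 : a * p + b * r = a := by
    have := hadj ![1, 0] ![1, 0]
    simp [dotProduct, Matrix.mulVec, Fin.sum_univ_two] at this
    linear_combination -this
  have e2 : a * q + b * s = c := by
    have := hadj ![0, 1] ![1, 0]
    simp [dotProduct, Matrix.mulVec, Fin.sum_univ_two] at this
    linear_combination -this
  have e3 : c * p + d * r = b := by
    have := hadj ![1, 0] ![0, 1]
    simp [dotProduct, Matrix.mulVec, Fin.sum_univ_two] at this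
    linear_combination -this
  have e4 : c * q + d * s = d := by
    have := hadj ![0, 1] ![0, 1]
    simp [dotProduct, Matrix.mulVec, Fin.sum_univ_two] at this
    linear_combination -this
  -- trace restrictions from the fixed point condition
  have ht2 : p + s ≠ 2 := by
    intro h
    rcases eq_or_ne (![s - 1, -r] : Fin 2 → ℤ) 0 with hv | hv
    · have hs1 : s = 1 := by have := congrFun hv 0; simpa using by linarith [show s - 1 = 0 from by simpa using congrFun hv 0]
      have hr0 : r = 0 := by have := congrFun hv 1; simpa using this
      have hp1 : p = 1 := by omega
      refine (hfix ![1, 0] (by intro h0; simpa using congrFun h0 0)).1 ?_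
      funext i; fin_cases i <;> simp [Matrix.mulVec, Fin.sum_univ_two, hp1, hr0]
    · refine (hfix _ hv).1 ?_
      funext i; fin_cases i <;> simp [Matrix.mulVec, Fin.sum_univ_two] <;>
        first
        | ring1
        | linear_combination -hDdet + h
        | linear_combination hDdet - h
  have ht2' : p + s ≠ -2 := by
    intro h
    rcases eq_or_ne (![s + 1, -r] : Fin 2 → ℤ) 0 with hv | hv
    · have hs1 : s = -1 := by linarith [show s + 1 = 0 from by simpa using congrFun hv 0]
      have hr0 : r = 0 := by simpa using congrFun hv 1
      have hp1 : p = -1 := by omega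
      refine (hfix ![1, 0] (by intro h0; simpa using congrFun h0 0)).2 ?_
      funext i; fin_cases i <;> simp [Matrix.mulVec, Fin.sum_univ_two, hp1, hr0]
    · refine (hfix _ hv).2 ?_
      funext i; fin_cases i <;> simp [Matrix.mulVec, Fin.sum_univ_two] <;>
        first
        | ring1
        | linear_combination -hDdet - h
        | linear_combination hDdet + h
  -- nondegeneracy
  have hΔ : a * d - b * c ≠ 0 := by
    intro h0
    have h1 : (![d, -b] : Fin 2 → ℤ) = 0 := by
      refine hnd _ fun y => ?_
      simp [dotProduct, Matrix.mulVec, Fin.sum_univ_two]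
      linear_combination (y 0) * h0
    have h2 : (![c, -a] : Fin 2 → ℤ) = 0 := by
      refine hnd _ fun y => ?_
      simp [dotProduct, Matrix.mulVec, Fin.sum_univ_two]
      linear_combination (-(y 1)) * h0
    have hd0 : d = 0 := by simpa using congrFun h1 0
    have hb0 : b = 0 := by have := congrFun h1 1; simpa using this
    have hc0 : c = 0 := by simpa using congrFun h2 0
    have ha0 : a = 0 := by have := congrFun h2 1; simpa using this
    have h3 : (![1, 0] : Fin 2 → ℤ) = 0 := by
      refine hnd _ fun y => ?_
      simp [dotProduct, Matrix.mulVec, Fin.sum_univ_two, ha0, hb0, hc0, hd0]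
    simpa using congrFun h3 0
  -- negativity
  have hA : a ≤ 0 := by have := hneg ![1, 0]; simpa [dotProduct, Matrix.mulVec, Fin.sum_univ_two] using this
  have hDd : d ≤ 0 := by have := hneg ![0, 1]; simpa [dotProduct, Matrix.mulVec, Fin.sum_univ_two] using this
  have hT : (b + c) ^ 2 ≤ 4 * (a * d) := by
    rcases lt_or_eq_of_le hA with ha' | ha'
    · have := hneg ![-(b + c), 2 * a]
      simp [dotProduct, Matrix.mulVec, Fin.sum_univ_two] at this
      nlinarith
    · have hbc0 : b + c = 0 := by
        by_contra hbc0
        have h1 := hneg ![(b + c) * (d * d + 1), 1]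
        simp [dotProduct, Matrix.mulVec, Fin.sum_univ_two, ha'] at h1
        have h2 : 1 ≤ (b + c) * (b + c) := by
          rcases lt_or_gt_of_ne hbc0 with h | h <;> nlinarith
        nlinarith [h2, mul_le_mul_of_nonneg_right h2 (show (0:ℤ) ≤ d * d + 1 by nlinarith [sq_nonneg d]),
          sq_nonneg (2 * d + 1)]
      rw [hbc0, ← ha']; nlinarith
  -- linear consequences
  have hp : (a * d - b * c) * p = a * d - b * b := by linear_combination d * e1 - b * e3
  have hr : (a * d - b * c) * r = a * (b - c) := by linear_combination a * e3 - c * e1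
  have hq : (a * d - b * c) * q = d * (c - b) := by linear_combination d * e2 - b * e4
  have hs : (a * d - b * c) * s = a * d - c * c := by linear_combination a * e4 - c * e2
  have hm2 : (b - c) ^ 2 = (a * d - b * c) * (2 - (p + s)) := by linear_combination hp + hs
  -- positivity of the determinant
  have hm0 : b - c ≠ 0 := by
    intro h
    have h0 : (a * d - b * c) * (2 - (p + s)) = 0 := by rw [← hm2, h]; ring
    rcases mul_eq_zero.mp h0 with h1 | h1
    · exact hΔ h1
    · exact ht2 (by omega)
  have hm1 : 1 ≤ (b - c) ^ 2 := by rcases lt_or_gt_of_ne hm0 with h | h <;> nlinarith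
  have hΔ1 : 1 ≤ a * d - b * c := by nlinarith
  have htub : p + s ≤ 1 := by nlinarith
  have htlb : -1 ≤ p + s := by
    have h2 : -2 ≤ p + s := by nlinarith
    omega
  have hADpos : 1 ≤ a * d := by nlinarith
  have haneg : a < 0 := by rcases lt_or_eq_of_le hA with h | h; exact h; nlinarith
  -- the index k
  have hk123 : 2 - (p + s) = 1 ∨ 2 - (p + s) = 2 ∨ 2 - (p + s) = 3 := by omega
  -- divisibility
  have hkdvd : (2 - (p + s)) ∣ (b - c) := by
    rcases hk123 with h | h | h <;> rw [h]
    · exact one_dvd _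
    · have heven : Even ((b - c) * (b - c)) :=
        ⟨(a * d - b * c), by linear_combination hm2 + (a*d-b*c) * h⟩
      rcases Int.even_mul.mp heven with h2 | h2 <;> exact h2.two_dvd
    · have h3 : (3:ℤ) ∣ (b - c) * (b - c) :=
        ⟨(a * d - b * c), by linear_combination hm2 + (a*d-b*c) * h⟩
      exact (Int.prime_three.dvd_mul.mp h3).elim id id
  obtain ⟨e, he⟩ := hkdvd
  have he0 : e ≠ 0 := by rintro rfl; simp at he; exact hm0 he
  have hke0 : (2 - (p + s)) * e ≠ 0 := by
    rcases hk123 with h | h | h <;> rw [h] <;> simpa using he0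
  have hΔe : a * d - b * c = (2 - (p + s)) * e ^ 2 := by
    have hck : ((2 - (p + s))) * (a * d - b * c) = ((2 - (p + s))) * ((2 - (p + s)) * e ^ 2) := by
      linear_combination -hm2 + (b - c + (2 - (p + s)) * e) * he
    exact mul_left_cancel₀ (by rcases hk123 with h | h | h <;> omega) hck
  have hqd : e * q = -d := mul_left_cancel₀ hke0 (by linear_combination hq - q * hΔe - d * he)
  have har : e * r = a := mul_left_cancel₀ hke0 (by linear_combination hr - r * hΔe + a * he)
  have hbp : e * (1 - p) = b := mul_left_cancel₀ hke0 (by linear_combination -hp + (p - 1) * hΔe + b * he)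
  have hcs : e * (s - 1) = c := mul_left_cancel₀ hke0 (by linear_combination hs - (s - 1) * hΔe + c * he)
  obtain ⟨ε, hε, hne⟩ : ∃ ε : ℤ, (ε = 1 ∨ ε = -1) ∧ 1 ≤ ε * e := by
    rcases lt_or_gt_of_ne he0 with h | h
    · exact ⟨-1, Or.inr rfl, by omega⟩
    · exact ⟨1, Or.inl rfl, by omega⟩
  have hε2 : ε * ε = 1 := by rcases hε with h | h <;> subst h <;> norm_num
  have haer : (ε * e) * (ε * r) = a := by linear_combination (e * r) * hε2 + har
  have hεr : ε * r < 0 := by nlinarith [haer, hne, haneg]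
  have hmeas : 2 * (-ε * r) + (-ε * (-q)) ≤ (((2 * (-ε * r) + (-ε * (-q))).toNat : ℕ) : ℤ) :=
    Int.self_le_toNat _
  have hdet1 : r * (-q) - (1 - p) * (s - 1) = 2 - (p + s) := by linear_combination hDdet
  obtain ⟨P, hPdet, hPeq⟩ := reduce_aux (2 - (p + s)) ε hk123 hε
    (2 * (-ε * r) + (-ε * (-q))).toNat r (1 - p) (s - 1) (-q)
    hmeas hdet1 (by ring) hεr
  have hMsmul : !![a, b; c, d] = e • !![r, 1 - p; s - 1, -q] := by
    ext i j
    fin_cases i <;> fin_cases j <;> simp [Matrix.smul_apply] <;>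
      first
      | linear_combination -har
      | linear_combination -hbp
      | linear_combination -hcs
      | linear_combination hqd
      | linear_combination -hqd
  have hfin : Pᵀ * !![a, b; c, d] * P = e • !![-ε, 1; 1 - (2 - (p + s)), -ε] := by
    rw [hMsmul, Matrix.mul_smul, Matrix.smul_mul, hPeq]
  refine ⟨P, hPdet, ε * e, hne, ε, hε, ?_⟩
  rcases hk123 with h | h | h <;> rw [h] at hfin
  · left
    rw [hfin]
    ext i j
    fin_cases i <;> fin_cases j <;> simp [Matrix.smul_apply] <;>
      first
      | ring1
      | linear_combination e * hε2
      | linear_combination (-e) * hε2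
      | linear_combination (-2 * e) * hε2
  · right; left
    rw [hfin]
    ext i j
    fin_cases i <;> fin_cases j <;> simp [Matrix.smul_apply] <;>
      first
      | ring1
      | linear_combination e * hε2
      | linear_combination (-e) * hε2
      | linear_combination (-2 * e) * hε2
  · right; right
    rw [hfin]
    ext i j
    fin_cases i <;> fin_cases j <;> simp [Matrix.smul_apply] <;>
      first
      | ring1
      | linear_combination e * hε2
      | linear_combination (-e) * hε2
      | linear_combination (-2 * e) * hε2
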